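/- arXiv:1705.02821 — 2 statements merged into one kernel-verified Lean document; each statement's English description precedes it below -/
import Mathlib

section
/- For any vector p ∈ ℝ³ with hat(p) the skew-symmetric matrix satisfying hat(p)v = p × v, and θ = ‖p‖ ≠ 0, the matrix exp(hat(p)) equals I + (sin θ / θ)·hat(p) + ((1 − cos θ)/θ²)·hat(p)², i.e., Rodrigues' formula holds for the matrix exponential of a skew-symmetric 3×3 matrix. -/
open Matrix Real
open scoped Nat

/-- The skew-symmetric "hat" matrix of `p ∈ ℝ³`, satisfying `hat p *ᵥ v = p × v`. -/
def hat (p : Fin 3 → ℝ) : Matrix (Fin 3) (Fin 3) ℝ :=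
  !![0, -p 2, p 1; p 2, 0, -p 0; -p 1, p 0, 0]

/-- Euclidean norm on `ℝ³` (as `Fin 3 → ℝ`). -/
noncomputable def nrm (p : Fin 3 → ℝ) : ℝ := Real.sqrt (∑ i, (p i) ^ 2)

/-- Rodrigues' formula: for `p ≠ 0` with `θ = ‖p‖`,
`exp(hat p) = I + (sin θ / θ) hat p + ((1 - cos θ)/θ²) (hat p)²`. -/
theorem rodrigues_formula (p : Fin 3 → ℝ)
    (hhat : ∀ v : Fin 3 → ℝ, hat p *ᵥ v = ![p 1 * v 2 - p 2 * v 1, p 2 * v 0 - p 0 * v 2,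
      p 0 * v 1 - p 1 * v 0])
    (θ : ℝ) (hθ : θ = nrm p) (hne : θ ≠ 0) :
    NormedSpace.exp (hat p)
      = (1 : Matrix (Fin 3) (Fin 3) ℝ) + (Real.sin θ / θ) • hat p
        + ((1 - Real.cos θ) / θ ^ 2) • (hat p * hat p) := by
  set A := hat p with hA
  have hθ2 : θ ^ 2 = p 0 ^ 2 + p 1 ^ 2 + p 2 ^ 2 := by
    rw [hθ, nrm, Real.sq_sqrt (by positivity), Fin.sum_univ_three]
  have hA3 : A * A * A = (-θ ^ 2) • A := by
    rw [hA, hat]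
    ext i j
    fin_cases i <;> fin_cases j <;>
      simp [Matrix.mul_apply, Fin.sum_univ_three, hθ2] <;> ring
  have hodd : ∀ k : ℕ, A ^ (2 * k + 1) = ((-θ ^ 2) ^ k) • A := by
    intro k
    induction k with
    | zero => simp
    | succ k ih =>
      have hA2 : A * A ^ 2 = (-θ ^ 2) • A := by rw [sq, ← mul_assoc, hA3]
      have : 2 * (k + 1) + 1 = (2 * k + 1) + 2 := by ring
      rw [this, pow_add, ih, smul_mul_assoc, hA2, smul_smul, ← pow_succ]
  have heven : ∀ k : ℕ, A ^ (2 * (k + 1)) = ((-θ ^ 2) ^ k) • (A * A) := by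
    intro k
    have : 2 * (k + 1) = (2 * k + 1) + 1 := by ring
    rw [this, pow_succ, hodd k, smul_mul_assoc]
  have hso : HasSum (fun n : ℕ => ((2 * n + 1)! : ℝ)⁻¹ • A ^ (2 * n + 1))
      ((Real.sin θ / θ) • A) := by
    have := ((Real.hasSum_sin θ).div_const θ).smul_const A
    convert this using 2 with n
    rw [hodd n, smul_smul]
    congr 1
    have hfac : ((2 * n + 1)! : ℝ) ≠ 0 := by positivity
    rw [neg_pow, ← pow_mul]
    field_simp
    ring
  have hse : HasSum (fun n : ℕ => ((2 * n)! : ℝ)⁻¹ • A ^ (2 * n))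
      ((1 : Matrix (Fin 3) (Fin 3) ℝ) + ((1 - Real.cos θ) / θ ^ 2) • (A * A)) := by
    have h1 : HasSum (fun n : ℕ => (-1 : ℝ) ^ (n + 1) * θ ^ (2 * (n + 1)) / (2 * (n + 1))!)
        (Real.cos θ - 1) := by
      have := (hasSum_nat_add_iff' (f := fun n : ℕ => (-1 : ℝ) ^ n * θ ^ (2 * n) / (2 * n)!) 1).mpr
        (Real.hasSum_cos θ)
      simpa using this
    have h2 : HasSum (fun n : ℕ => ((2 * (n + 1))! : ℝ)⁻¹ • A ^ (2 * (n + 1)))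
        (((1 - Real.cos θ) / θ ^ 2) • (A * A)) := by
      have := ((h1.neg.div_const (θ ^ 2)).smul_const (A * A))
      convert this using 2 with n
      · rw [heven n, smul_smul]
        congr 1
        have hfac : ((2 * (n + 1))! : ℝ) ≠ 0 := by positivity
        have hθ2ne : θ ^ 2 ≠ 0 := pow_ne_zero _ hne
        rw [neg_pow, ← pow_mul]
        have : θ ^ (2 * (n + 1)) = θ ^ (2 * n) * θ ^ 2 := by rw [← pow_add]; ring_nf
        rw [this]
        field_simp
        ring
      · rw [neg_sub]
    have h3 := (hasSum_nat_add_iff (f := fun n : ℕ => ((2 * n)! : ℝ)⁻¹ • A ^ (2 * n)) 1).mp h2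
    simpa [add_comm] using h3
  have hsum : HasSum (fun n : ℕ => ((n)! : ℝ)⁻¹ • A ^ n)
      (((1 : Matrix (Fin 3) (Fin 3) ℝ) + ((1 - Real.cos θ) / θ ^ 2) • (A * A))
        + (Real.sin θ / θ) • A) := HasSum.even_add_odd hse hso
  have hexp : NormedSpace.exp A = ∑' n : ℕ, ((n)! : ℝ)⁻¹ • A ^ n := by
    rw [NormedSpace.exp_eq_tsum (𝕂 := ℝ)]
  rw [hexp, hsum.tsum_eq]
  abel
end

section
/- For p ∈ ℝ³ with 0 < ‖p‖ < π, one has tr(exp(hat(p))) = 1 + 2cos(‖p‖), and log(exp(hat(p))) = hat(p), where log(R) = (θ/(2 sin θ))(R − Rᵀ) with θ = arccos((tr R − 1)/2). -/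
open Matrix Real
open scoped Nat

/-- The matrix logarithm: `log R = (θ / (2 sin θ)) (R - Rᵀ)` with
`θ = arccos((tr R - 1)/2)`. -/
noncomputable def matLog (R : Matrix (Fin 3) (Fin 3) ℝ) : Matrix (Fin 3) (Fin 3) ℝ :=
  (Real.arccos ((R.trace - 1) / 2) / (2 * Real.sin (Real.arccos ((R.trace - 1) / 2)))) • (R - Rᵀ)

lemma hat_cube (p : Fin 3 → ℝ) :
    (hat p) ^ 3 = (-(p 0 ^ 2 + p 1 ^ 2 + p 2 ^ 2)) • hat p := by
  ext i j
  fin_cases i <;> fin_cases j <;>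
    simp [hat, pow_succ, Matrix.mul_apply, Fin.sum_univ_succ] <;> ring

lemma hat_trace (p : Fin 3 → ℝ) : (hat p).trace = 0 := by
  simp [hat, Matrix.trace, Fin.sum_univ_succ]

lemma hat_sq_trace (p : Fin 3 → ℝ) :
    ((hat p) ^ 2).trace = -2 * (p 0 ^ 2 + p 1 ^ 2 + p 2 ^ 2) := by
  simp [hat, Matrix.trace, pow_two, Matrix.mul_apply, Fin.sum_univ_succ, Matrix.diag]
  ring

lemma hat_transpose (p : Fin 3 → ℝ) : (hat p)ᵀ = -(hat p) := by
  ext i j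
  fin_cases i <;> fin_cases j <;> simp [hat]

lemma hat_pow_odd (p : Fin 3 → ℝ) (k : ℕ) :
    (hat p) ^ (2 * k + 1) = (-(p 0 ^ 2 + p 1 ^ 2 + p 2 ^ 2)) ^ k • hat p := by
  induction k with
  | zero => simp
  | succ k ih =>
    have : 2 * (k + 1) + 1 = (2 * k + 1) + 2 := by ring
    rw [this, pow_add, ih, Matrix.smul_mul, ← pow_succ', hat_cube, smul_smul, ← pow_succ]

lemma hat_pow_even (p : Fin 3 → ℝ) (k : ℕ) :
    (hat p) ^ (2 * (k + 1)) = (-(p 0 ^ 2 + p 1 ^ 2 + p 2 ^ 2)) ^ k • (hat p) ^ 2 := by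
  have : 2 * (k + 1) = (2 * k + 1) + 1 := by ring
  rw [this, pow_succ, hat_pow_odd, Matrix.smul_mul, ← pow_two]

set_option maxHeartbeats 1000000 in
/-- Rodrigues' formula. -/
lemma exp_hat (p : Fin 3 → ℝ) (h0 : 0 < nrm p) :
    NormedSpace.exp (hat p) =
      (1 : Matrix (Fin 3) (Fin 3) ℝ) + (Real.sin (nrm p) / nrm p) • hat p +
        ((1 - Real.cos (nrm p)) / (nrm p) ^ 2) • (hat p) ^ 2 := by
  set θ := nrm p with hθ
  have hs0 : (0:ℝ) ≤ ∑ i, (p i) ^ 2 := by positivity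
  have hθ2 : θ ^ 2 = p 0 ^ 2 + p 1 ^ 2 + p 2 ^ 2 := by
    rw [hθ, nrm, Real.sq_sqrt hs0, Fin.sum_univ_three]
  have hθne : θ ≠ 0 := ne_of_gt h0
  set s : ℝ := p 0 ^ 2 + p 1 ^ 2 + p 2 ^ 2 with hs
  have hsθ : s = θ ^ 2 := hθ2.symm
  rw [NormedSpace.exp_eq_tsum (𝕂 := ℝ)]
  refine HasSum.tsum_eq ?_
  have heven : HasSum (fun k : ℕ => (((2 * k)! : ℝ)⁻¹) • (hat p) ^ (2 * k))
      (((1 - Real.cos θ) / θ ^ 2) • (hat p) ^ 2 + 1) := by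
    have hc := Real.hasSum_cos θ
    -- drop the k = 0 term
    have hc1 : HasSum (fun k : ℕ => (-1 : ℝ) ^ (k + 1) * θ ^ (2 * (k + 1)) / (2 * (k + 1))!)
        (Real.cos θ - 1) := by
      have := (hasSum_nat_add_iff' (f := fun n : ℕ => (-1 : ℝ) ^ n * θ ^ (2 * n) / (2 * n)!) 1).mpr hc
      simpa using this
    have hc2 := (hc1.mul_left (-(1 / θ ^ 2))).smul_const ((hat p) ^ 2)
    have hkey : (fun k : ℕ => (((2 * (k + 1))! : ℝ)⁻¹) • (hat p) ^ (2 * (k + 1))) =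
        fun k : ℕ => (-(1 / θ ^ 2) * ((-1 : ℝ) ^ (k + 1) * θ ^ (2 * (k + 1)) / (2 * (k + 1))!)) •
          ((hat p) ^ 2) := by
      funext k
      rw [hat_pow_even, smul_smul]
      congr 1
      rw [← hs, hsθ]
      have : (θ ^ 2) ^ k ≠ 0 := pow_ne_zero _ (pow_ne_zero _ hθne)
      field_simp
      ring
    have hc3 : HasSum (fun k : ℕ => (((2 * (k + 1))! : ℝ)⁻¹) • (hat p) ^ (2 * (k + 1)))
        (((1 - Real.cos θ) / θ ^ 2) • (hat p) ^ 2) := by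
      rw [hkey]
      convert hc2 using 2
      field_simp
      ring
    have := (hasSum_nat_add_iff (f := fun k : ℕ => (((2 * k)! : ℝ)⁻¹) • (hat p) ^ (2 * k)) 1).mp
      hc3
    simpa using this
  have hodd : HasSum (fun k : ℕ => (((2 * k + 1)! : ℝ)⁻¹) • (hat p) ^ (2 * k + 1))
      ((Real.sin θ / θ) • hat p) := by
    have hsin := (Real.hasSum_sin θ).div_const θ
    have := hsin.smul_const (hat p)
    convert this using 2 with k
    rw [hat_pow_odd, smul_smul, ← hs, hsθ]
    congr 1
    have h2 : θ ^ (2 * k + 1) = (θ ^ 2) ^ k * θ := by rw [pow_succ, pow_mul]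
    rw [neg_pow, h2]
    field_simp
  have htot : HasSum (fun n : ℕ => ((n ! : ℝ)⁻¹) • (hat p) ^ n)
      ((((1 - Real.cos θ) / θ ^ 2) • (hat p) ^ 2 + 1) + (Real.sin θ / θ) • hat p) :=
    HasSum.even_add_odd heven hodd
  convert htot using 1
  · rfl
  abel

/-- For `0 < ‖p‖ < π`, `tr(exp(hat p)) = 1 + 2 cos ‖p‖` and `log(exp(hat p)) = hat p`. -/
theorem matLog_exp_hat (p : Fin 3 → ℝ) (h0 : 0 < nrm p) (hπ : nrm p < Real.pi) :
    (NormedSpace.exp (hat p)).trace = 1 + 2 * Real.cos (nrm p) ∧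
      matLog (NormedSpace.exp (hat p)) = hat p := by
  set θ := nrm p with hθ
  have hθne : θ ≠ 0 := ne_of_gt h0
  have hs0 : (0:ℝ) ≤ ∑ i, (p i) ^ 2 := by positivity
  have hθ2 : θ ^ 2 = p 0 ^ 2 + p 1 ^ 2 + p 2 ^ 2 := by
    rw [hθ, nrm, Real.sq_sqrt hs0, Fin.sum_univ_three]
  have hR := exp_hat p h0
  have htr : (NormedSpace.exp (hat p)).trace = 1 + 2 * Real.cos θ := by
    rw [hR, ← hθ]
    simp only [Matrix.trace_add, Matrix.trace_smul, hat_trace, hat_sq_trace, Matrix.trace_one, Fintype.card_fin]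
    rw [← hθ2]
    have : θ ^ 2 ≠ 0 := pow_ne_zero _ hθne
    field_simp
    simp only [smul_eq_mul, mul_zero, add_zero]
    rw [mul_neg, ← mul_assoc, div_mul_cancel₀ _ this]
    push_cast
    ring
  refine ⟨htr, ?_⟩
  have hsin : Real.sin θ ≠ 0 := ne_of_gt (Real.sin_pos_of_pos_of_lt_pi h0 hπ)
  have harc : Real.arccos (((NormedSpace.exp (hat p)).trace - 1) / 2) = θ := by
    rw [htr]
    have : (1 + 2 * Real.cos θ - 1) / 2 = Real.cos θ := by ring
    rw [this, Real.arccos_cos h0.le hπ.le]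
  have hRT : NormedSpace.exp (hat p) - (NormedSpace.exp (hat p))ᵀ =
      (2 * (Real.sin θ / θ)) • hat p := by
    rw [hR]
    simp only [Matrix.transpose_add, Matrix.transpose_smul, Matrix.transpose_one,
      Matrix.transpose_pow, hat_transpose]
    rw [two_mul]
    ext i j
    simp [neg_pow]
    ring
  rw [matLog, harc, hRT, smul_smul]
  have : θ / (2 * Real.sin θ) * (2 * (Real.sin θ / θ)) = 1 := by
    field_simp
  rw [this, one_smul]
end
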